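/- Let G be an SMG with vertex set V of size n, Muller objectives Muller(φ_i), and let t ∈ ℕ. Let G′ be the unfolded game with vertex set V′ = {u ∈ V* | |u| ≤ t+1} (each vertex of G′ recording the suffix of length at most t of the history preceding the current vertex), transitions (xv, p, xvw) for |x| < t and (xv, p, x[1:]vw) for |x| = t whenever (v,p,w) ∈ Δ, and objectives Muller(φ′_i) where φ′_i replaces each variable v_j of φ_i by the disjunction of all history-annotated copies x v_j with |x| ≤ t. Then G′ has O(n^n) vertices when t ∈ O(n), pure t-memory strategies in G correspond to positional strategies in G′, and the answer to Pure t-memory-Muller-NCRSP for (G, μ) equals the answer to Positional-Muller-NCRSP for (G′, μ). -/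

import Mathlib

/- Common infrastructure for formalizing statements about stochastic
   multiplayer non-zero-sum games (SMGs) and the non-cooperative rational
   synthesis problem (NCRSP), following the paper's definitions. -/

open scoped ENNReal

namespace NCRSPPaper

/-! ### Game arenas -/

/-- A stochastic multiplayer game arena with players `Fin (k+1)` (player `0`
is the system) over vertex type `V`.  A vertex with `owner v = none` is a
nature vertex; its outgoing transition probabilities are given by `prob`.
Player-controlled vertices have their possible moves given by `edge`. -/
structure Arena (k : ℕ) (V : Type) where
  owner : V → Option (Fin (k + 1))
  edge : V → V → Bool
  prob : V → V → ℚ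
  init : V

variable {k : ℕ} {V : Type}

/-- The set of successors of a vertex. -/
def Arena.next (A : Arena k V) (u : V) : Set V :=
  {v | (A.owner u = none ∧ 0 < A.prob u v) ∨ (A.owner u ≠ none ∧ A.edge u v = true)}

/-- A terminal vertex: its only outgoing edge is the self loop. -/
def Arena.terminal (A : Arena k V) (v : V) : Prop := A.next v = {v}

/-- Well-formedness of an arena: every vertex has a successor and the
nature rows are probability distributions. -/
def Arena.WF [Fintype V] (A : Arena k V) : Prop :=
  (∀ u, (A.next u).Nonempty) ∧
  ∀ u, A.owner u = none → (∀ v, 0 ≤ A.prob u v) ∧ (∑ v, A.prob u v) = 1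

/-! ### Plays -/

/-- A play is an infinite sequence of vertices. -/
abbrev Play (V : Type) := ℕ → V

/-- `infSet π` is the set of vertices occurring infinitely often in `π`. -/
def infSet (π : Play V) : Set V := {v | ∀ m, ∃ l, m ≤ l ∧ π l = v}

/-! ### Strategies -/

/-- A (behavioral, possibly history-dependent, probabilistic) strategy:
given the history of vertices strictly preceding the current one and the
current vertex, it yields a probability distribution over vertices. -/
abbrev Strategy (V : Type) := List V → V → PMF V

/-- A strategy is valid for an arena if it only assigns positive
probability to successors of the current vertex. -/
def Strategy.Valid (A : Arena k V) (σ : Strategy V) : Prop :=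
  ∀ hist u v, σ hist u v ≠ 0 → v ∈ A.next u

/-- A stationary (memoryless) strategy depends only on the current vertex. -/
def Strategy.Stationary (σ : Strategy V) : Prop :=
  ∀ h h' u, σ h u = σ h' u

/-- A pure (deterministic) strategy assigns probability 1 to a single move. -/
def Strategy.Pure (σ : Strategy V) : Prop :=
  ∀ h u, ∃ v, σ h u v = 1

/-- A positional strategy is pure and stationary. -/
def Strategy.Positional (σ : Strategy V) : Prop :=
  Strategy.Stationary σ ∧ Strategy.Pure σ

/-- A finite-state strategy is realized by a Mealy machine with finitely
many memory states. -/
def Strategy.FiniteState (σ : Strategy V) : Prop :=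
  ∃ (M : Type) (_ : Finite M) (m0 : M) (upd : M → V → M) (out : M → V → PMF V),
    ∀ h u, σ h u = out (h.foldl upd m0) u

/-- A `t`-memory strategy only depends on the most recent `t` vertices of
the history (plus the current vertex). -/
def Strategy.TMemory (t : ℕ) (σ : Strategy V) : Prop :=
  ∀ h u, σ h u = σ (h.drop (h.length - t)) u

/-- A strategy profile assigns a strategy to every player. -/
abbrev Profile (k : ℕ) (V : Type) := Fin (k + 1) → Strategy V

def Profile.Valid (A : Arena k V) (σ : Profile k V) : Prop :=
  ∀ i, Strategy.Valid A (σ i)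

/-! ### The induced probability of a set of plays -/

/-- One-step transition probability at vertex `u` with preceding history
`hist`, under strategy profile `σ`. -/
noncomputable def Arena.stepProb (A : Arena k V) (σ : Profile k V)
    (hist : List V) (u v : V) : ℝ≥0∞ :=
  match A.owner u with
  | none => ENNReal.ofReal ((A.prob u v : ℚ) : ℝ)
  | some i => σ i hist u v

/-- Probability that, starting from current vertex `u` with preceding
history `hist`, the play continues with the given finite word. -/
noncomputable def extProb (A : Arena k V) (σ : Profile k V) :
    List V → V → List V → ℝ≥0∞
  | _, _, [] => 1
  | hist, u, v :: rest => A.stepProb σ hist u v * extProb A σ (hist ++ [u]) v rest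

/-- Probability that a play starting at `s` begins with the finite word `w`. -/
noncomputable def wordProbFrom [DecidableEq V] (A : Arena k V) (σ : Profile k V)
    (s : V) : List V → ℝ≥0∞
  | [] => 1
  | v :: rest => (if v = s then 1 else 0) * extProb A σ [] v rest

/-- The cylinder of plays extending a finite word. -/
def cyl (w : List V) : Set (Play V) :=
  {π | ∀ i (h : i < w.length), π i = w.get ⟨i, h⟩}

open scoped Classical in
/-- `PrFrom A σ s O` is the probability, under the strategy profile `σ`
(and nature's probabilities), that a play starting at `s` belongs to `O`.
It is defined as the Carathéodory outer measure generated by the natural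
premeasure on cylinder sets. -/
noncomputable def PrFrom [DecidableEq V] (A : Arena k V) (σ : Profile k V)
    (s : V) : Set (Play V) → ℝ≥0∞ :=
  fun O =>
    MeasureTheory.OuterMeasure.ofFunction
      (fun S => if S = ∅ then 0
                else ⨅ (w : List V) (_ : S ⊆ cyl w), wordProbFrom A σ s w)
      (by simp) O

/-- The payoff of player `i`: probability that the objective `O i` is met,
for the play started at the initial vertex. -/
noncomputable def Pay [DecidableEq V] (A : Arena k V)
    (O : Fin (k + 1) → Set (Play V)) (σ : Profile k V) (i : Fin (k + 1)) : ℝ≥0∞ :=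
  PrFrom A σ A.init (O i)

/-! ### Equilibria and synthesis problems -/

/-- Nash equilibrium: no player has a profitable unilateral deviation. -/
def NE [DecidableEq V] (A : Arena k V) (O : Fin (k + 1) → Set (Play V))
    (σ : Profile k V) : Prop :=
  ∀ i, ∀ τ : Strategy V, Strategy.Valid A τ →
    Pay A O (Function.update σ i τ) i ≤ Pay A O σ i

/-- 0-fixed Nash equilibrium: no environment player (`i ≠ 0`) has a
profitable unilateral deviation. -/
def ZeroNE [DecidableEq V] (A : Arena k V) (O : Fin (k + 1) → Set (Play V))
    (σ : Profile k V) : Prop :=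
  ∀ i, i ≠ 0 → ∀ τ : Strategy V, Strategy.Valid A τ →
    Pay A O (Function.update σ i τ) i ≤ Pay A O σ i

/-- The (yes-instances of the) cooperative rational synthesis problem, with
all strategies restricted to class `C`:
`∃ σ̄. NE(σ̄) ∧ Pay₀(σ̄) ≥ μ`. -/
def CRSPAnswer [DecidableEq V] (A : Arena k V) (O : Fin (k + 1) → Set (Play V))
    (C : Strategy V → Prop) (μ : ℚ) : Prop :=
  ∃ σ : Profile k V, Profile.Valid A σ ∧ (∀ i, C (σ i)) ∧ NE A O σ ∧
    ENNReal.ofReal (μ : ℝ) ≤ Pay A O σ 0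

/-- The (yes-instances of the) non-cooperative rational synthesis problem,
with the system's strategy restricted to class `C0` and the environment
players' strategies restricted to class `Cenv`:
`∃ σ₀. ∀ σ̄₋₀. (0NE(σ̄) ⇒ Pay₀(σ̄) ≥ μ)`. -/
def NCRSPAnswer [DecidableEq V] (A : Arena k V) (O : Fin (k + 1) → Set (Play V))
    (C0 Cenv : Strategy V → Prop) (μ : ℚ) : Prop :=
  ∃ σ0 : Strategy V, Strategy.Valid A σ0 ∧ C0 σ0 ∧
    ∀ σ : Profile k V, σ 0 = σ0 → Profile.Valid A σ →
      (∀ i, i ≠ 0 → Cenv (σ i)) →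
      ZeroNE A O σ → ENNReal.ofReal (μ : ℝ) ≤ Pay A O σ 0

/-- The variant `NCRSP>` with strict payoff threshold. -/
def NCRSPgtAnswer [DecidableEq V] (A : Arena k V) (O : Fin (k + 1) → Set (Play V))
    (C0 Cenv : Strategy V → Prop) (μ : ℚ) : Prop :=
  ∃ σ0 : Strategy V, Strategy.Valid A σ0 ∧ C0 σ0 ∧
    ∀ σ : Profile k V, σ 0 = σ0 → Profile.Valid A σ →
      (∀ i, i ≠ 0 → Cenv (σ i)) →
      ZeroNE A O σ → ENNReal.ofReal (μ : ℝ) < Pay A O σ 0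

/-- The complement problem of `NCRSP>`:
`∀ σ₀. ∃ σ̄₋₀. (0NE(σ̄) ∧ Pay₀(σ̄) ≤ μ)`. -/
def CoNCRSPgtAnswer [DecidableEq V] (A : Arena k V) (O : Fin (k + 1) → Set (Play V))
    (C0 Cenv : Strategy V → Prop) (μ : ℚ) : Prop :=
  ∀ σ0 : Strategy V, Strategy.Valid A σ0 → C0 σ0 →
    ∃ σ : Profile k V, σ 0 = σ0 ∧ Profile.Valid A σ ∧
      (∀ i, i ≠ 0 → Cenv (σ i)) ∧
      ZeroNE A O σ ∧ Pay A O σ 0 ≤ ENNReal.ofReal (μ : ℝ)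

/-! ### Objectives -/

/-- Boolean formulas with variables drawn from `α`. -/
inductive BForm (α : Type) : Type
  | tru : BForm α
  | fls : BForm α
  | var : α → BForm α
  | not : BForm α → BForm α
  | and : BForm α → BForm α → BForm α
  | or : BForm α → BForm α → BForm α

namespace BForm

def holds {α : Type} (θ : α → Prop) : BForm α → Prop
  | tru => True
  | fls => False
  | var a => θ a
  | not f => ¬ holds θ f
  | and f g => holds θ f ∧ holds θ g
  | or f g => holds θ f ∨ holds θ g

def map {α β : Type} (f : α → β) : BForm α → BForm β
  | tru => tru
  | fls => fls
  | var a => var (f a)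
  | not g => not (map f g)
  | and g h => and (map f g) (map f h)
  | or g h => or (map f g) (map f h)

def subst {α β : Type} (f : α → BForm β) : BForm α → BForm β
  | tru => tru
  | fls => fls
  | var a => f a
  | not g => not (subst f g)
  | and g h => and (subst f g) (subst f h)
  | or g h => or (subst f g) (subst f h)

def bigOr {α : Type} : List (BForm α) → BForm α
  | [] => fls
  | f :: fs => or f (bigOr fs)

/-- An (arbitrary but fixed) encoding of Boolean formulas over `ℕ` into `ℕ`. -/
def toNat : BForm ℕ → ℕ
  | tru => Nat.pair 0 0
  | fls => Nat.pair 1 0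
  | var i => Nat.pair 2 i
  | not f => Nat.pair 3 (toNat f)
  | and f g => Nat.pair 4 (Nat.pair (toNat f) (toNat g))
  | or f g => Nat.pair 5 (Nat.pair (toNat f) (toNat g))

end BForm

/-- The Muller objective given by a Boolean formula over the vertices:
the set of plays `π` such that `inf(π) ⊨ φ`. -/
def mullerObj (φ : BForm V) : Set (Play V) :=
  {π | BForm.holds (· ∈ infSet π) φ}

/-- Terminal-reachability objective for a set `F` of (terminal) vertices. -/
def trObjS (F : Set V) : Set (Play V) := {π | ∃ m, π m ∈ F}

/-- Terminal-reachability objective, Boolean-valued version. -/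
def trObj (F : V → Bool) : Set (Play V) := trObjS {v | F v = true}

/-! ### End components -/

/-- `E` is an end component of the arena `A` regarded as an MDP of
player `i`: it is nonempty, strongly connected, every vertex of `E`
has a successor in `E`, and vertices not controlled by `i` have all
their successors in `E`. -/
def IsEndComponent (A : Arena k V) (i : Fin (k + 1)) (E : Set V) : Prop :=
  E.Nonempty ∧
  (∀ u ∈ E, ∀ v ∈ E,
    Relation.ReflTransGen (fun a b => a ∈ E ∧ b ∈ E ∧ b ∈ A.next a) u v) ∧
  (∀ v ∈ E, (A.next v ∩ E).Nonempty) ∧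
  (∀ v ∈ E, A.owner v ≠ some i → A.next v ⊆ E)

end NCRSPPaper

namespace NCRSPPaper

/-! ### A concrete machine model, resource-bounded classes, encodings -/

/-- A configuration of a machine with `s+1` states and tape alphabet
`Fin (a+3)` (symbol `0` is the blank, symbols `1`/`2` encode the input
bits `false`/`true`), on a one-way infinite tape. -/
structure Cfg (s a : ℕ) where
  q : Fin (s + 1)
  tape : ℕ → Fin (a + 3)
  pos : ℕ

def blankSym (a : ℕ) : Fin (a + 3) := ⟨0, by omega⟩

def bitSym (a : ℕ) (b : Bool) : Fin (a + 3) :=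
  if b then ⟨2, by omega⟩ else ⟨1, by omega⟩

def initCfg (s a : ℕ) (q0 : Fin (s + 1)) (x : List Bool) : Cfg s a :=
  ⟨q0, fun i => if h : i < x.length then bitSym a (x.get ⟨i, h⟩) else blankSym a, 0⟩

/-- The tape holds the output `y` (as bits, followed by a blank). -/
def readsOff {a : ℕ} (tape : ℕ → Fin (a + 3)) (y : List Bool) : Prop :=
  (∀ i : Fin y.length, tape (i : ℕ) = bitSym a (y.get i)) ∧
  tape y.length = blankSym a

/-- A deterministic Turing machine (one-way infinite single tape). -/
structure TM where
  states : ℕ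
  symbols : ℕ
  start : Fin (states + 1)
  accept : Fin (states + 1)
  step : Fin (states + 1) → Fin (symbols + 3) →
    Option (Fin (states + 1) × Fin (symbols + 3) × Bool)

namespace TM

def stepCfg (M : TM) (c : Cfg M.states M.symbols) : Option (Cfg M.states M.symbols) :=
  match M.step c.q (c.tape c.pos) with
  | none => none
  | some (q', a, mv) =>
      some ⟨q', Function.update c.tape c.pos a, if mv then c.pos + 1 else c.pos - 1⟩

def run (M : TM) (x : List Bool) : ℕ → Option (Cfg M.states M.symbols)
  | 0 => some (initCfg M.states M.symbols M.start x)
  | t + 1 => (M.run x t).bind M.stepCfg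

def Halted (M : TM) (c : Cfg M.states M.symbols) : Prop := M.stepCfg c = none

/-- `M` decides the language `L` (with no resource bound): on every input it
halts, and it halts in the accepting state iff the input is in `L`. -/
def Decides (M : TM) (L : Set (List Bool)) : Prop :=
  ∀ x, ∃ t c, M.run x t = some c ∧ M.Halted c ∧ (x ∈ L ↔ c.q = M.accept)

/-- `M` decides `L` within time `T` (as a function of the input length). -/
def DecidesInTime (M : TM) (L : Set (List Bool)) (T : ℕ → ℕ) : Prop :=
  ∀ x, ∃ t ≤ T x.length, ∃ c, M.run x t = some c ∧ M.Halted c ∧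
    (x ∈ L ↔ c.q = M.accept)

/-- `M` decides `L` within space `S`: it halts with the correct verdict and
never moves its head beyond cell `S(|x|)`. -/
def DecidesInSpace (M : TM) (L : Set (List Bool)) (S : ℕ → ℕ) : Prop :=
  ∀ x, (∃ t c, M.run x t = some c ∧ M.Halted c ∧ (x ∈ L ↔ c.q = M.accept)) ∧
    ∀ t c, M.run x t = some c → c.pos < S x.length

/-- `M` computes, on the encoded inputs `g x`, the encoded outputs `h x`,
within time `T`. -/
def ComputesOn {I : Type} (M : TM) (g h : I → List Bool) (T : ℕ → ℕ) : Prop :=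
  ∀ x, ∃ t ≤ T (g x).length, ∃ c, M.run (g x) t = some c ∧ M.Halted c ∧
    readsOff c.tape (h x)

/-- `M` computes the function `f` on all inputs within time `T`. -/
def ComputesInTime (M : TM) (f : List Bool → List Bool) (T : ℕ → ℕ) : Prop :=
  M.ComputesOn id f T

end TM

/-- A nondeterministic Turing machine. -/
structure NTM where
  states : ℕ
  symbols : ℕ
  start : Fin (states + 1)
  accept : Fin (states + 1)
  step : Fin (states + 1) → Fin (symbols + 3) →
    Finset (Fin (states + 1) × Fin (symbols + 3) × Bool)

namespace NTM

def stepRel (M : NTM) (c c' : Cfg M.states M.symbols) : Prop :=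
  ∃ r ∈ M.step c.q (c.tape c.pos),
    c' = ⟨r.1, Function.update c.tape c.pos r.2.1,
          if r.2.2 then c.pos + 1 else c.pos - 1⟩

/-- `M` has an accepting run on `x` staying within space `S`. -/
def AcceptsInSpace (M : NTM) (x : List Bool) (S : ℕ) : Prop :=
  ∃ (t : ℕ) (cs : ℕ → Cfg M.states M.symbols),
    cs 0 = initCfg M.states M.symbols M.start x ∧
    (∀ i < t, M.stepRel (cs i) (cs (i + 1))) ∧
    (cs t).q = M.accept ∧
    ∀ i ≤ t, (cs i).pos < S

/-- The nondeterministic machine `M` decides `L` within space `S`. -/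
def DecidesInSpace (M : NTM) (L : Set (List Bool)) (S : ℕ → ℕ) : Prop :=
  ∀ x, x ∈ L ↔ M.AcceptsInSpace x (S x.length)

end NTM

/-! #### Complexity classes -/

def In2EXPTIME (L : Set (List Bool)) : Prop :=
  ∃ (M : TM) (c : ℕ), M.DecidesInTime L (fun n => 2 ^ 2 ^ (n ^ c + c))

def In3EXPTIME (L : Set (List Bool)) : Prop :=
  ∃ (M : TM) (c : ℕ), M.DecidesInTime L (fun n => 2 ^ 2 ^ 2 ^ (n ^ c + c))

def InPSPACE (L : Set (List Bool)) : Prop :=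
  ∃ (M : TM) (c : ℕ), M.DecidesInSpace L (fun n => n ^ c + c)

def InEXPSPACE (L : Set (List Bool)) : Prop :=
  ∃ (M : TM) (c : ℕ), M.DecidesInSpace L (fun n => 2 ^ (n ^ c + c))

def InNEXPSPACE (L : Set (List Bool)) : Prop :=
  ∃ (M : NTM) (c : ℕ), M.DecidesInSpace L (fun n => 2 ^ (n ^ c + c))

/-- A language is undecidable if no machine decides it. -/
def Undecidable (L : Set (List Bool)) : Prop := ¬ ∃ M : TM, M.Decides L

def PolytimeComputable (f : List Bool → List Bool) : Prop :=
  ∃ (M : TM) (c : ℕ), M.ComputesInTime f (fun n => n ^ c + c)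

def PolytimeReducible (L L' : Set (List Bool)) : Prop :=
  ∃ f, PolytimeComputable f ∧ ∀ x, x ∈ L ↔ f x ∈ L'

def PSPACEHard (L' : Set (List Bool)) : Prop :=
  ∀ L, InPSPACE L → PolytimeReducible L L'

/-- The language of (the encodings of) the yes-instances of a decision
problem `P` on instances of type `I`, for an encoding `enc`. -/
def langOf {I : Type} (enc : I → List Bool) (P : I → Prop) : Set (List Bool) :=
  {w | ∃ x, enc x = w ∧ P x}

/-! #### Encoding of game instances -/

/-- A concrete encoding of an arena over `Fin n` as a natural number. -/
def encodeArena {k n : ℕ} (A : Arena k (Fin n)) : ℕ :=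
  Encodable.encode
    ( k, n,
      List.ofFn (fun v : Fin n => (A.owner v).map Fin.val),
      List.ofFn (fun v : Fin n => List.ofFn (fun w : Fin n => A.edge v w)),
      List.ofFn (fun v : Fin n => List.ofFn (fun w : Fin n => A.prob v w)),
      (A.init : ℕ) )

/-- An instance of NCRSP with Muller objectives: an SMG over vertices
`Fin n` with players `Fin (k+1)`, Muller objectives given by Boolean
formulas, and a threshold `μ ∈ [0,1]`. -/
structure MullerInstance where
  k : ℕ
  n : ℕ
  A : Arena k (Fin n)
  obj : Fin (k + 1) → BForm (Fin n)
  μ : ℚ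
  wf : A.WF
  hμ0 : 0 ≤ μ
  hμ1 : μ ≤ 1

def encodeMullerInstance (I : MullerInstance) : List Bool :=
  Nat.bits (Encodable.encode
    ( encodeArena I.A,
      List.ofFn (fun i => (BForm.map Fin.val (I.obj i)).toNat),
      Encodable.encode I.μ ))

/-- An instance of NCRSP with terminal-reachability objectives. -/
structure TRInstance where
  k : ℕ
  n : ℕ
  A : Arena k (Fin n)
  F : Fin (k + 1) → Fin n → Bool
  μ : ℚ
  wf : A.WF
  hterm : ∀ i v, F i v = true → A.terminal v
  hμ0 : 0 ≤ μ
  hμ1 : μ ≤ 1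

def encodeTRInstance (I : TRInstance) : List Bool :=
  Nat.bits (Encodable.encode
    ( encodeArena I.A,
      List.ofFn (fun i => List.ofFn (fun v => I.F i v)),
      Encodable.encode I.μ ))

/-- An instance of `t`-memory NCRSP with Muller objectives. -/
structure MullerTInstance where
  k : ℕ
  n : ℕ
  A : Arena k (Fin n)
  obj : Fin (k + 1) → BForm (Fin n)
  t : ℕ
  μ : ℚ
  wf : A.WF
  hμ0 : 0 ≤ μ
  hμ1 : μ ≤ 1

def encodeMullerTInstance (I : MullerTInstance) : List Bool :=
  Nat.bits (Encodable.encode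
    ( encodeArena I.A,
      List.ofFn (fun i => (BForm.map Fin.val (I.obj i)).toNat),
      I.t,
      Encodable.encode I.μ ))

/-- An instance of `t`-memory NCRSP on a non-stochastic game (NSMG,
no nature vertices) with terminal-reachability objectives. -/
structure TRTInstance where
  k : ℕ
  n : ℕ
  A : Arena k (Fin n)
  F : Fin (k + 1) → Fin n → Bool
  t : ℕ
  μ : ℚ
  wf : A.WF
  nonature : ∀ v, A.owner v ≠ none
  hterm : ∀ i v, F i v = true → A.terminal v
  hμ0 : 0 ≤ μ
  hμ1 : μ ≤ 1

def encodeTRTInstance (I : TRTInstance) : List Bool :=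
  Nat.bits (Encodable.encode
    ( encodeArena I.A,
      List.ofFn (fun i => List.ofFn (fun v => I.F i v)),
      I.t,
      Encodable.encode I.μ ))

end NCRSPPaper

namespace NCRSPPaper

/-! ### First-order logic over the ordered field of real numbers -/

/-- Terms over the signature `(+, ×, 0, 1)`, with de Bruijn variables. -/
inductive RTerm : Type
  | var : ℕ → RTerm
  | zero : RTerm
  | one : RTerm
  | add : RTerm → RTerm → RTerm
  | mul : RTerm → RTerm → RTerm

namespace RTerm

noncomputable def eval (ρ : ℕ → ℝ) : RTerm → ℝ
  | var i => ρ i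
  | zero => 0
  | one => 1
  | add s t => eval ρ s + eval ρ t
  | mul s t => eval ρ s * eval ρ t

def toNat : RTerm → ℕ
  | var i => Nat.pair 0 i
  | zero => Nat.pair 1 0
  | one => Nat.pair 2 0
  | add s t => Nat.pair 3 (Nat.pair (toNat s) (toNat t))
  | mul s t => Nat.pair 4 (Nat.pair (toNat s) (toNat t))

end RTerm

/-- First-order formulas over the signature `(+, ×, 0, 1, ≤)`, with de
Bruijn variables. -/
inductive RForm : Type
  | le : RTerm → RTerm → RForm
  | not : RForm → RForm
  | and : RForm → RForm → RForm
  | or : RForm → RForm → RForm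
  | ex : RForm → RForm
  | all : RForm → RForm

namespace RForm

/-- Satisfaction in the structure `(ℝ, +, ×, 0, 1, ≤)`. -/
def holds : (ℕ → ℝ) → RForm → Prop
  | ρ, le s t => RTerm.eval ρ s ≤ RTerm.eval ρ t
  | ρ, not f => ¬ holds ρ f
  | ρ, and f g => holds ρ f ∧ holds ρ g
  | ρ, or f g => holds ρ f ∨ holds ρ g
  | ρ, ex f => ∃ x : ℝ, holds (fun i => match i with | 0 => x | j + 1 => ρ j) f
  | ρ, all f => ∀ x : ℝ, holds (fun i => match i with | 0 => x | j + 1 => ρ j) f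

/-- Validity (truth in `(ℝ, +, ×, 0, 1, ≤)` under every assignment;
for sentences this is just truth). -/
def valid (f : RForm) : Prop := ∀ ρ, holds ρ f

/-- Quantifier-free formulas. -/
def QFree : RForm → Prop
  | le _ _ => True
  | not f => QFree f
  | and f g => QFree f ∧ QFree g
  | or f g => QFree f ∧ QFree g
  | ex _ => False
  | all _ => False

/-- Existential formulas: a block of existential quantifiers applied to a
quantifier-free formula (prenex form with only existential quantifiers). -/
inductive IsExistential : RForm → Prop
  | qf {f : RForm} : QFree f → IsExistential f
  | ex {f : RForm} : IsExistential f → IsExistential (RForm.ex f)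

def toNat : RForm → ℕ
  | le s t => Nat.pair 0 (Nat.pair s.toNat t.toNat)
  | not f => Nat.pair 1 (toNat f)
  | and f g => Nat.pair 2 (Nat.pair (toNat f) (toNat g))
  | or f g => Nat.pair 3 (Nat.pair (toNat f) (toNat g))
  | ex f => Nat.pair 4 (toNat f)
  | all f => Nat.pair 5 (toNat f)

end RForm

def encodeRForm (f : RForm) : List Bool := Nat.bits f.toNat

/-! ### Quantified Boolean formulas -/

/-- Truth of a prenex QBF: `qs` is the (outermost-first) list of
quantifiers (`true` = `∀`, `false` = `∃`); the quantifier at the head of a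
suffix of length `j+1` binds variable `j`. -/
def qbfHolds (φ : BForm ℕ) : List Bool → (ℕ → Bool) → Prop
  | [], ρ => BForm.holds (fun i => ρ i = true) φ
  | q :: qs, ρ =>
      if q then ∀ b : Bool, qbfHolds φ qs (Function.update ρ qs.length b)
      else ∃ b : Bool, qbfHolds φ qs (Function.update ρ qs.length b)

/-- Variables of a Boolean formula are `< m`. -/
def BForm.varsLT (m : ℕ) : BForm ℕ → Prop
  | BForm.tru => True
  | BForm.fls => True
  | BForm.var i => i < m
  | BForm.not f => f.varsLT m
  | BForm.and f g => f.varsLT m ∧ g.varsLT m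
  | BForm.or f g => f.varsLT m ∧ g.varsLT m

/-- A prenex quantified Boolean formula with `quants.length` variables. -/
structure QBFInst where
  quants : List Bool
  matrix : BForm ℕ
  wf : matrix.varsLT quants.length

def QBFInst.IsTrue (Q : QBFInst) : Prop :=
  qbfHolds Q.matrix Q.quants (fun _ => false)

def encodeQBFInst (Q : QBFInst) : List Bool :=
  Nat.bits (Encodable.encode (Q.quants, Q.matrix.toNat))

end NCRSPPaper

namespace NCRSPPaper

/-! ### The unfolded game of Statement 16 -/

/-- The vertex set of the unfolded game: words over `V` of length at most
`t+1` (each recording the length-`≤ t` suffix of the history preceding the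
current vertex, followed by the current vertex). -/
abbrev UnfV (V : Type) (t : ℕ) : Type := {l : List V // l.length ≤ t + 1}

/-- The word reached from the word `w` when the play moves to `u`. -/
def succWord {V : Type} (t : ℕ) (w : List V) (u : V) : List V :=
  if w.length ≤ t then w ++ [u] else (w.drop 1) ++ [u]

/-- The unfolding of an arena with memory bound `t`: vertices are words,
a word is owned by the owner of its last letter, and transitions
`(xv, p, xvw)` for `|x| < t` resp. `(xv, p, x[1:]vw)` for `|x| = t` mimic
the transitions `(v, p, w)` of the original arena.  (Words not arising as
histories, such as the empty word, are unreachable; they are given a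
self-loop so that the arena stays well-formed.) -/
def unfoldArena {k : ℕ} {V : Type} [DecidableEq V] (A : Arena k V) (t : ℕ) :
    Arena k (UnfV V t) where
  owner w :=
    match w.val.getLast? with
    | some v => A.owner v
    | none => some 0
  edge w w' :=
    match w.val.getLast?, w'.val.getLast? with
    | some v, some u => A.edge v u && decide (w'.val = succWord t w.val u)
    | none, none => true
    | _, _ => false
  prob w w' :=
    match w.val.getLast?, w'.val.getLast? with
    | some v, some u => if w'.val = succWord t w.val u then A.prob v u else 0
    | _, _ => 0
  init := ⟨[A.init], by simp⟩

/-- All words over `Fin n` of length exactly `j`. -/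
def allListsLen (n : ℕ) : ℕ → List (List (Fin n))
  | 0 => [[]]
  | j + 1 => (List.finRange n).flatMap fun a => (allListsLen n j).map (a :: ·)

/-- All words over `Fin n` of length at most `t`. -/
def wordsUpTo (n t : ℕ) : List (List (Fin n)) :=
  (List.range (t + 1)).flatMap (allListsLen n)

/-- The Muller formula of the unfolded game: each variable `v` is replaced
by the disjunction of all its history-annotated copies `xv` with `|x| ≤ t`. -/
def unfoldForm {n : ℕ} (t : ℕ) (φ : BForm (Fin n)) : BForm (UnfV (Fin n) t) :=
  φ.subst fun v =>
    BForm.bigOr <| (wordsUpTo n t).filterMap fun x =>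
      if h : (x ++ [v]).length ≤ t + 1 then some (BForm.var ⟨x ++ [v], h⟩)
      else none

/-! ### Auxiliary development for Statement 16 -/

section Statement16Aux

/-! #### Boolean formula lemmas -/

theorem holds_congr' {α : Type} {θ θ' : α → Prop} (h : ∀ a, θ a ↔ θ' a) :
    ∀ φ : BForm α, BForm.holds θ φ ↔ BForm.holds θ' φ
  | .tru => Iff.rfl
  | .fls => Iff.rfl
  | .var a => h a
  | .not f => by simp only [BForm.holds]; rw [holds_congr' h f]
  | .and f g => by simp only [BForm.holds]; rw [holds_congr' h f, holds_congr' h g]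
  | .or f g => by simp only [BForm.holds]; rw [holds_congr' h f, holds_congr' h g]

theorem holds_subst' {α β : Type} (θ : β → Prop) (f : α → BForm β) :
    ∀ φ : BForm α,
      BForm.holds θ (BForm.subst f φ) ↔ BForm.holds (fun a => BForm.holds θ (f a)) φ
  | .tru => Iff.rfl
  | .fls => Iff.rfl
  | .var _ => Iff.rfl
  | .not g => by
      simp only [BForm.subst, BForm.holds]; rw [holds_subst' θ f g]
  | .and g h => by
      simp only [BForm.subst, BForm.holds]; rw [holds_subst' θ f g, holds_subst' θ f h]
  | .or g h => by
      simp only [BForm.subst, BForm.holds]; rw [holds_subst' θ f g, holds_subst' θ f h]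

theorem holds_bigOr' {α : Type} (θ : α → Prop) (L : List (BForm α)) :
    BForm.holds θ (BForm.bigOr L) ↔ ∃ ψ ∈ L, BForm.holds θ ψ := by
  induction L with
  | nil => simp [BForm.bigOr, BForm.holds]
  | cons ψ L ih => simp [BForm.bigOr, BForm.holds, ih]

theorem mem_allListsLen {n : ℕ} : ∀ (j : ℕ) (l : List (Fin n)), l ∈ allListsLen n j ↔ l.length = j
  | 0, l => by cases l <;> simp [allListsLen]
  | j + 1, l => by
    cases l with
    | nil => simp [allListsLen]
    | cons a l' =>
      simp [allListsLen, List.mem_flatMap, List.mem_map, List.mem_finRange,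
        mem_allListsLen j]

theorem mem_wordsUpTo {n t : ℕ} (l : List (Fin n)) : l ∈ wordsUpTo n t ↔ l.length ≤ t := by
  simp only [wordsUpTo, List.mem_flatMap, List.mem_range]
  constructor
  · rintro ⟨j, hj, hl⟩; rw [(mem_allListsLen j l).1 hl]; omega
  · intro h; exact ⟨l.length, by omega, (mem_allListsLen _ l).2 rfl⟩

/-! #### Words, traces, lifts -/

def trace {α : Type} (t : ℕ) (h : List α) (u : α) : List α :=
  h.drop (h.length - t) ++ [u]

theorem trace_length {α : Type} (t : ℕ) (h : List α) (u : α) : (trace t h u).length ≤ t + 1 := by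
  simp [trace]; omega

theorem trace_ne_nil {α : Type} (t : ℕ) (h : List α) (u : α) : trace t h u ≠ [] := by
  simp [trace]

theorem trace_getLast? {α : Type} (t : ℕ) (h : List α) (u : α) :
    (trace t h u).getLast? = some u := List.getLast?_concat

theorem trace_dropLast {α : Type} (t : ℕ) (h : List α) (u : α) :
    (trace t h u).dropLast = h.drop (h.length - t) := List.dropLast_concat

theorem trace_drop {α : Type} (t : ℕ) (h : List α) (u : α) :
    trace t (h.drop (h.length - t)) u = trace t h u := by
  unfold trace
  rw [show (h.drop (h.length - t)).length - t = 0 by rw [List.length_drop]; omega,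
    List.drop_zero]

theorem succWord_length {V : Type} {t : ℕ} {w : List V} (hw : w.length ≤ t + 1) (u : V) :
    (succWord t w u).length ≤ t + 1 := by
  unfold succWord; split <;> simp <;> omega

theorem succWord_getLast? {V : Type} (t : ℕ) (w : List V) (u : V) :
    (succWord t w u).getLast? = some u := by
  unfold succWord; split <;> exact List.getLast?_concat

theorem trace_snoc {α : Type} (t : ℕ) (h : List α) (u v : α) :
    trace t (h ++ [u]) v = succWord t (trace t h u) v := by
  unfold trace succWord
  rcases le_or_gt (h.length + 1) t with hle | hlt
  · rw [if_pos (by simp [List.length_drop]; omega)]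
    rw [show (h ++ [u]).length - t = 0 by simp; omega,
      show h.length - t = 0 by omega]
    simp
  · rw [if_neg (by simp [List.length_drop]; omega)]
    have ht : t ≤ h.length := by omega
    rcases Nat.eq_zero_or_pos t with ht0 | htpos
    · subst ht0
      have e1 : (h ++ [u]).drop ((h ++ [u]).length - 0) = ([] : List α) := by
        rw [Nat.sub_zero, List.drop_length]
      have e2 : h.drop (h.length - 0) = ([] : List α) := by
        rw [Nat.sub_zero, List.drop_length]
      rw [e1, e2]; rfl
    · have e1 : (h ++ [u]).length - t = h.length - t + 1 := by simp; omega
      rw [e1, List.drop_append_of_le_length (by omega),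
        List.drop_append_of_le_length
          (show 1 ≤ (h.drop (h.length - t)).length by rw [List.length_drop]; omega),
        List.drop_drop]

def traceV {V : Type} (t : ℕ) (h : List V) (u : V) : UnfV V t := ⟨trace t h u, trace_length t h u⟩

theorem traceV_val {V : Type} (t : ℕ) (h : List V) (u : V) : (traceV t h u).val = trace t h u := rfl

def gw {V : Type} {t : ℕ} (w : UnfV V t) (u : V) : UnfV V t :=
  ⟨succWord t w.val u, succWord_length w.2 u⟩

def last' {V : Type} (v₀ : V) {t : ℕ} (w : UnfV V t) : V := w.val.getLast?.getD v₀

theorem last'_traceV {V : Type} (v₀ : V) (t : ℕ) (h : List V) (u : V) :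
    last' v₀ (traceV t h u) = u := by
  simp [last', traceV_val, trace_getLast?]

theorem last'_gw {V : Type} (v₀ : V) {t : ℕ} (w : UnfV V t) (u : V) :
    last' v₀ (gw w u) = u := by
  simp [last', gw, succWord_getLast?]

theorem last'_spec {V : Type} (v₀ : V) {t : ℕ} (w : UnfV V t) (hw : w.val ≠ []) :
    w.val.getLast? = some (last' v₀ w) := by
  cases hl : w.val.getLast? with
  | none => exact absurd (List.getLast?_eq_none_iff.1 hl) hw
  | some v => simp [last', hl]

theorem last'_eq_getLast {V : Type} (v₀ : V) {t : ℕ} (w : UnfV V t) (hw : w.val ≠ []) :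
    last' v₀ w = w.val.getLast hw := by
  rw [last', List.getLast?_eq_getLast hw]; rfl

theorem gw_traceV {V : Type} (t : ℕ) (h : List V) (u v : V) :
    gw (traceV t h u) v = traceV t (h ++ [u]) v :=
  Subtype.ext (trace_snoc t h u v).symm

def lifts {V : Type} (t : ℕ) : List V → List V → List (UnfV V t)
  | _, [] => []
  | pre, u :: rest => traceV t pre u :: lifts t (pre ++ [u]) rest

theorem lifts_snoc {V : Type} (t : ℕ) (w : List V) : ∀ (pre : List V) (v : V),
    lifts t pre (w ++ [v]) = lifts t pre w ++ [traceV t (pre ++ w) v] := by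
  induction w with
  | nil => intro pre v; simp [lifts]
  | cons u w ih =>
    intro pre v
    show traceV t pre u :: lifts t (pre ++ [u]) (w ++ [v])
        = traceV t pre u :: (lifts t (pre ++ [u]) w ++ [traceV t (pre ++ u :: w) v])
    rw [ih (pre ++ [u]) v, List.append_assoc, List.singleton_append]

theorem lifts_length {V : Type} (t : ℕ) : ∀ (w pre : List V), (lifts t pre w).length = w.length
  | [], _ => rfl
  | u :: w, pre => by simp [lifts, lifts_length t w]

theorem map_last'_lifts {V : Type} (v₀ : V) (t : ℕ) : ∀ (w pre : List V),
    (lifts t pre w).map (last' v₀) = w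
  | [], _ => rfl
  | u :: w, pre => by simp [lifts, map_last'_lifts v₀ t w, last'_traceV]

def pfx {V : Type} (π : ℕ → V) (L : ℕ) : List V := (List.range L).map π

theorem pfx_length {V : Type} (π : ℕ → V) (L : ℕ) : (pfx π L).length = L := by simp [pfx]

theorem pfx_snoc {V : Type} (π : ℕ → V) (L : ℕ) : pfx π (L + 1) = pfx π L ++ [π L] := by
  simp [pfx, List.range_succ]

theorem pfx_map {V W : Type} (f : V → W) (π : ℕ → V) (L : ℕ) :
    (pfx π L).map f = pfx (fun l => f (π l)) L := by
  simp [pfx, List.map_map]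

def liftP {V : Type} (t : ℕ) (π : Play V) : Play (UnfV V t) :=
  fun j => traceV t (pfx π j) (π j)

theorem lifts_pfx {V : Type} (t : ℕ) (π : Play V) : ∀ L, lifts t [] (pfx π L) = pfx (liftP t π) L
  | 0 => rfl
  | L + 1 => by
    rw [pfx_snoc, lifts_snoc, lifts_pfx t π L, pfx_snoc (liftP t π) L]
    rfl

theorem mem_cyl_iff {V : Type} (π : Play V) (w : List V) : π ∈ cyl w ↔ pfx π w.length = w := by
  constructor
  · intro h
    refine List.ext_getElem (by simp [pfx]) fun i h1 h2 => ?_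
    have e : (pfx π w.length)[i] = π i := by simp [pfx]
    rw [e]
    exact h i h2
  · intro h i hi
    rw [List.get_of_eq h.symm]
    simp [pfx]

instance instFiniteUnfV {n t : ℕ} : Finite (UnfV (Fin n) t) := by
  refine Finite.of_injective
    (fun w : UnfV (Fin n) t => (fun j : Fin (t + 1) => w.val[j.val]?)) ?_
  intro w w' hww
  apply Subtype.ext
  apply List.ext_getElem?
  intro i
  by_cases hi : i < t + 1
  · exact congrFun hww ⟨i, hi⟩
  · have h1 : w.val.length ≤ i := le_trans w.2 (by omega)
    have h2 : w'.val.length ≤ i := le_trans w'.2 (by omega)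
    rw [List.getElem?_eq_none h1, List.getElem?_eq_none h2]

theorem card_UnfV_le (n t : ℕ) : Nat.card (UnfV (Fin n) t) ≤ (n + 1) ^ (t + 1) := by
  classical
  set f : UnfV (Fin n) t → (Fin (t + 1) → Fin (n + 1)) := fun w j =>
    if h : j.val < w.val.length then Fin.castSucc w.val[j.val] else Fin.last n with hf
  have hlen : ∀ a b : UnfV (Fin n) t, f a = f b → a.val.length ≤ b.val.length := by
    intro a b hab
    by_contra hc
    push_neg at hc
    have hb : b.val.length < t + 1 := by have := a.2; omega
    have hfb := congrFun hab ⟨b.val.length, hb⟩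
    simp only [hf] at hfb
    rw [dif_pos (show b.val.length < a.val.length from hc), dif_neg (by omega)] at hfb
    exact absurd hfb (Fin.castSucc_lt_last _).ne
  have hinj : Function.Injective f := by
    intro a b hab
    have hl : a.val.length = b.val.length := le_antisymm (hlen a b hab) (hlen b a hab.symm)
    apply Subtype.ext
    refine List.ext_getElem hl fun i h1 h2 => ?_
    have hi : i < t + 1 := by have := a.2; omega
    have hfi := congrFun hab ⟨i, hi⟩
    simp only [hf] at hfi
    rw [dif_pos h1, dif_pos h2] at hfi
    exact Fin.castSucc_injective _ hfi
  calc Nat.card (UnfV (Fin n) t) ≤ Nat.card (Fin (t + 1) → Fin (n + 1)) :=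
        Nat.card_le_card_of_injective f hinj
    _ = (n + 1) ^ (t + 1) := by simp [Nat.card_fun, Nat.card_eq_fintype_card]

/-! #### PMF lemmas -/

theorem pmf_map_cancel {α β : Type} (p : PMF α) (g : α → β) (f : β → α)
    (hfg : ∀ a, f (g a) = a) : PMF.map f (PMF.map g p) = p := by
  rw [PMF.map_comp, show f ∘ g = id from funext hfg, PMF.map_id]

theorem pmf_map_map_cancel_on {α β : Type} (p : PMF α) (f : α → β) (g : β → α)
    (h : ∀ a, p a ≠ 0 → g (f a) = a) : PMF.map g (PMF.map f p) = p := by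
  classical
  rw [PMF.map_comp]
  ext b
  rw [PMF.map_apply]
  have key : ∀ a, (if b = (g ∘ f) a then p a else 0) = if a = b then p b else 0 := by
    intro a
    simp only [Function.comp_apply]
    by_cases hpa : p a = 0
    · by_cases hab : a = b
      · subst hab; simp [hpa]
      · simp [hpa, hab]
    · by_cases hab : a = b
      · subst hab; rw [if_pos (h a hpa).symm, if_pos rfl]
      · rw [if_neg (fun hba => hab (by rw [h a hpa] at hba; exact hba.symm)), if_neg hab]
  rw [tsum_congr key, tsum_ite_eq]

theorem pmf_map_ne_zero {α β : Type} (p : PMF α) (f : α → β) (b : β)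
    (hb : PMF.map f p b ≠ 0) : ∃ a, p a ≠ 0 ∧ b = f a := by
  classical
  rw [PMF.map_apply] at hb
  by_contra hc
  push_neg at hc
  apply hb
  rw [ENNReal.tsum_eq_zero]
  intro a
  by_cases hba : b = f a
  · rw [if_pos hba]
    by_contra hpa
    exact (hc a hpa) hba
  · rw [if_neg hba]

theorem pmf_map_apply_eq {α β : Type} (p : PMF α) (f : α → β) (b : β) (a₀ : α)
    (h1 : f a₀ = b) (h2 : ∀ a, p a ≠ 0 → f a = b → a = a₀) :
    PMF.map f p b = p a₀ := by
  classical
  have hsingle : (∑' a, if b = f a then p a else 0) = (if b = f a₀ then p a₀ else 0) :=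
    tsum_eq_single a₀ (fun a ha => by
      by_cases hpa : p a = 0
      · by_cases hfa : b = f a
        · rw [if_pos hfa, hpa]
        · rw [if_neg hfa]
      · by_cases hfa : b = f a
        · exact absurd (h2 a hpa hfa.symm) ha
        · rw [if_neg hfa])
  rw [PMF.map_apply, hsingle, if_pos h1.symm]

theorem pmf_map_apply_one {α β : Type} (p : PMF α) (f : α → β) (a : α) (h : p a = 1) :
    PMF.map f p (f a) = 1 := by
  classical
  refine le_antisymm (PMF.coe_le_one _ _) ?_
  rw [PMF.map_apply]
  calc (1 : ℝ≥0∞) = (if f a = f a then p a else 0) := by rw [if_pos rfl, h]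
    _ ≤ ∑' a', if f a = f a' then p a' else 0 := ENNReal.le_tsum a

theorem pmf_eq_pure {α : Type} (p : PMF α) (a : α) (h : ∀ b, p b ≠ 0 → b = a) :
    p = PMF.pure a := by
  classical
  have h1 : p a = 1 := by
    have h2 := p.tsum_coe
    rwa [tsum_eq_single a (fun b hb => by by_contra hc; exact hb (h b hc))] at h2
  ext b
  by_cases hb : b = a
  · subst hb; rw [h1, PMF.pure_apply, if_pos rfl]
  · have h0 : p b = 0 := by by_contra hc; exact hb (h b hc)
    rw [h0, PMF.pure_apply, if_neg hb]

/-! #### Unfolded arena lemmas -/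

section ArenaLemmas

variable {k : ℕ} {V : Type} [DecidableEq V] (A : Arena k V) (t : ℕ)

theorem unfold_owner {w : UnfV V t} {u : V} (hw : w.val.getLast? = some u) :
    (unfoldArena A t).owner w = A.owner u := by
  simp only [unfoldArena]; rw [hw]

theorem unfold_owner_nil {w : UnfV V t} (hw : w.val.getLast? = none) :
    (unfoldArena A t).owner w = some 0 := by
  simp only [unfoldArena]; rw [hw]

theorem unfold_prob_eq {w w' : UnfV V t} {u v : V} (hw : w.val.getLast? = some u)
    (hw' : w'.val.getLast? = some v) :
    (unfoldArena A t).prob w w' = if w'.val = succWord t w.val v then A.prob u v else 0 := by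
  simp only [unfoldArena]; rw [hw, hw']

theorem unfold_prob_none {w w' : UnfV V t} {u : V} (hw : w.val.getLast? = some u)
    (hw' : w'.val.getLast? = none) : (unfoldArena A t).prob w w' = 0 := by
  simp only [unfoldArena]; rw [hw, hw']

theorem unfold_edge_eq {w w' : UnfV V t} {u v : V} (hw : w.val.getLast? = some u)
    (hw' : w'.val.getLast? = some v) :
    (unfoldArena A t).edge w w' = (A.edge u v && decide (w'.val = succWord t w.val v)) := by
  simp only [unfoldArena]; rw [hw, hw']

theorem unfold_edge_none {w w' : UnfV V t} {u : V} (hw : w.val.getLast? = some u)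
    (hw' : w'.val.getLast? = none) : (unfoldArena A t).edge w w' = false := by
  simp only [unfoldArena]; rw [hw, hw']

theorem unfold_next_elim {w w' : UnfV V t} {u : V} (hw : w.val.getLast? = some u)
    (hmem : w' ∈ (unfoldArena A t).next w) :
    ∃ v, w' = gw w v ∧ v ∈ A.next u := by
  rcases hmem with ⟨ho, hp⟩ | ⟨ho, he⟩
  · rw [unfold_owner A t hw] at ho
    cases hl' : w'.val.getLast? with
    | none => rw [unfold_prob_none A t hw hl'] at hp; exact absurd hp (lt_irrefl 0)
    | some v =>
      rw [unfold_prob_eq A t hw hl'] at hp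
      by_cases hc : w'.val = succWord t w.val v
      · rw [if_pos hc] at hp
        exact ⟨v, Subtype.ext hc, Or.inl ⟨ho, hp⟩⟩
      · rw [if_neg hc] at hp; exact absurd hp (lt_irrefl 0)
  · rw [unfold_owner A t hw] at ho
    cases hl' : w'.val.getLast? with
    | none => rw [unfold_edge_none A t hw hl'] at he; exact absurd he (by simp)
    | some v =>
      rw [unfold_edge_eq A t hw hl'] at he
      rw [Bool.and_eq_true, decide_eq_true_eq] at he
      exact ⟨v, Subtype.ext he.2, Or.inr ⟨ho, he.1⟩⟩

theorem unfold_next_intro {w : UnfV V t} {u v : V} (hw : w.val.getLast? = some u)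
    (hv : v ∈ A.next u) : gw w v ∈ (unfoldArena A t).next w := by
  rcases hv with ⟨ho, hp⟩ | ⟨ho, he⟩
  · left
    refine ⟨by rw [unfold_owner A t hw, ho], ?_⟩
    rw [unfold_prob_eq A t hw (succWord_getLast? t w.val v),
      if_pos (show (gw w v).val = succWord t w.val v from rfl)]
    exact hp
  · right
    refine ⟨by rw [unfold_owner A t hw]; exact ho, ?_⟩
    rw [unfold_edge_eq A t hw (succWord_getLast? t w.val v)]
    simp [he, gw]

theorem unfold_next_nil {w : UnfV V t} (hw : w.val = []) :
    (unfoldArena A t).next w = {w} := by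
  have hl : w.val.getLast? = none := by rw [hw]; rfl
  ext w'
  simp only [Arena.next, Set.mem_setOf_eq, Set.mem_singleton_iff]
  constructor
  · rintro (⟨ho, _⟩ | ⟨_, he⟩)
    · rw [unfold_owner_nil A t hl] at ho; exact absurd ho (by simp)
    · cases hl' : w'.val.getLast? with
      | some v =>
        rw [show (unfoldArena A t).edge w w' = false by
          simp only [unfoldArena]; rw [hl, hl']] at he
        exact absurd he (by simp)
      | none => exact Subtype.ext (by rw [hw, List.getLast?_eq_none_iff.1 hl'])
  · intro h; subst h
    right
    refine ⟨by rw [unfold_owner_nil A t hl]; simp, ?_⟩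
    simp only [unfoldArena]; rw [hl]

end ArenaLemmas

/-! #### Strategy transformations -/

section StrategyMaps

variable {k : ℕ} {V : Type} [DecidableEq V]

noncomputable def down (v₀ : V) (t : ℕ) (σ' : Strategy (UnfV V t)) : Strategy V :=
  fun h u => PMF.map (last' v₀) (σ' (lifts t [] h) (traceV t h u))

noncomputable def liftPos (v₀ : V) (t : ℕ) (τ : Strategy V) : Strategy (UnfV V t) :=
  fun _ w => if w.val = [] then PMF.pure w
    else PMF.map (gw w) (τ w.val.dropLast (last' v₀ w))

noncomputable def liftGen (v₀ : V) (t : ℕ) (τ : Strategy V) : Strategy (UnfV V t) :=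
  fun h' w => if w.val = [] then PMF.pure w
    else PMF.map (gw w) (τ (h'.map (last' v₀)) (last' v₀ w))

theorem liftPos_traceV (v₀ : V) (t : ℕ) (τ : Strategy V) (h' : List (UnfV V t))
    (h : List V) (u : V) :
    liftPos v₀ t τ h' (traceV t h u)
      = PMF.map (gw (traceV t h u)) (τ (h.drop (h.length - t)) u) := by
  simp only [liftPos, traceV_val]
  simp only [trace_ne_nil t h u, ↓reduceIte]
  rw [last'_traceV, trace_dropLast]

theorem liftGen_traceV (v₀ : V) (t : ℕ) (τ : Strategy V) (h' : List (UnfV V t))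
    (h : List V) (u : V) :
    liftGen v₀ t τ h' (traceV t h u)
      = PMF.map (gw (traceV t h u)) (τ (h'.map (last' v₀)) u) := by
  simp only [liftGen, traceV_val]
  simp only [trace_ne_nil t h u, ↓reduceIte]
  rw [last'_traceV]

theorem down_liftGen (v₀ : V) (t : ℕ) (τ : Strategy V) : down v₀ t (liftGen v₀ t τ) = τ := by
  funext h u
  simp only [down]
  rw [liftGen_traceV, map_last'_lifts]
  exact pmf_map_cancel _ _ _ (fun a => last'_gw v₀ _ a)

theorem down_liftPos (v₀ : V) (t : ℕ) (τ : Strategy V) (ht : Strategy.TMemory t τ) :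
    down v₀ t (liftPos v₀ t τ) = τ := by
  funext h u
  simp only [down]
  rw [liftPos_traceV, pmf_map_cancel _ _ _ (fun a => last'_gw v₀ _ a)]
  exact (ht h u).symm

theorem liftPos_down {k : ℕ} (A : Arena k V) (t : ℕ) (σ' : Strategy (UnfV V t))
    (hs : Strategy.Stationary σ') (hv : Strategy.Valid (unfoldArena A t) σ') :
    liftPos A.init t (down A.init t σ') = σ' := by
  funext h' w
  by_cases hw : w.val = []
  · simp only [liftPos]
    rw [if_pos hw]
    symm
    apply pmf_eq_pure
    intro b hb
    have hmem : b ∈ (unfoldArena A t).next w := hv h' w b hb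
    rw [unfold_next_nil A t hw] at hmem
    exact hmem
  · simp only [liftPos]
    rw [if_neg hw]
    have hlast := last'_spec A.init w hw
    have hw2 : traceV t w.val.dropLast (last' A.init w) = w := by
      apply Subtype.ext
      simp only [traceV_val, trace]
      rw [show w.val.dropLast.length - t = 0 by
            have h1 := w.2
            have h2 : w.val.dropLast.length = w.val.length - 1 := List.length_dropLast
            omega,
        List.drop_zero, last'_eq_getLast A.init w hw,
        List.dropLast_append_getLast hw]
    simp only [down]
    rw [hw2, hs (lifts t [] w.val.dropLast) h' w]
    apply pmf_map_map_cancel_on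
    intro a ha
    obtain ⟨v, hav, _⟩ := unfold_next_elim A t hlast (hv h' w a ha)
    rw [hav, last'_gw]

theorem liftPos_stationary (v₀ : V) (t : ℕ) (τ : Strategy V) :
    Strategy.Stationary (liftPos v₀ t τ) := fun _ _ _ => rfl

theorem liftPos_pure (v₀ : V) (t : ℕ) (τ : Strategy V) (hτ : Strategy.Pure τ) :
    Strategy.Pure (liftPos v₀ t τ) := by
  intro h' w
  by_cases hw : w.val = []
  · refine ⟨w, ?_⟩
    simp only [liftPos]
    rw [if_pos hw, PMF.pure_apply, if_pos rfl]
  · obtain ⟨v, hv⟩ := hτ w.val.dropLast (last' v₀ w)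
    refine ⟨gw w v, ?_⟩
    simp only [liftPos]
    rw [if_neg hw]
    exact pmf_map_apply_one _ _ _ hv

theorem liftPos_valid {k : ℕ} (A : Arena k V) (t : ℕ) (τ : Strategy V)
    (hτ : Strategy.Valid A τ) :
    Strategy.Valid (unfoldArena A t) (liftPos A.init t τ) := by
  intro h' w b hb
  by_cases hw : w.val = []
  · simp only [liftPos] at hb
    rw [if_pos hw] at hb
    have hbw : b = w := by
      by_contra hc
      rw [PMF.pure_apply, if_neg hc] at hb; exact hb rfl
    subst hbw
    rw [unfold_next_nil A t hw]
    rfl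
  · simp only [liftPos] at hb
    rw [if_neg hw] at hb
    obtain ⟨a, ha, hba⟩ := pmf_map_ne_zero _ _ _ hb
    rw [hba]
    exact unfold_next_intro A t (last'_spec A.init w hw) (hτ _ _ _ ha)

theorem liftGen_valid {k : ℕ} (A : Arena k V) (t : ℕ) (τ : Strategy V)
    (hτ : Strategy.Valid A τ) :
    Strategy.Valid (unfoldArena A t) (liftGen A.init t τ) := by
  intro h' w b hb
  by_cases hw : w.val = []
  · simp only [liftGen] at hb
    rw [if_pos hw] at hb
    have hbw : b = w := by
      by_contra hc
      rw [PMF.pure_apply, if_neg hc] at hb; exact hb rfl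
    subst hbw
    rw [unfold_next_nil A t hw]
    rfl
  · simp only [liftGen] at hb
    rw [if_neg hw] at hb
    obtain ⟨a, ha, hba⟩ := pmf_map_ne_zero _ _ _ hb
    rw [hba]
    exact unfold_next_intro A t (last'_spec A.init w hw) (hτ _ _ _ ha)

theorem down_pure (v₀ : V) (t : ℕ) (σ' : Strategy (UnfV V t)) (hσ : Strategy.Pure σ') :
    Strategy.Pure (down v₀ t σ') := by
  intro h u
  obtain ⟨w, hw⟩ := hσ (lifts t [] h) (traceV t h u)
  exact ⟨last' v₀ w, pmf_map_apply_one _ _ _ hw⟩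

theorem down_tmemory (v₀ : V) (t : ℕ) (σ' : Strategy (UnfV V t))
    (hσ : Strategy.Stationary σ') : Strategy.TMemory t (down v₀ t σ') := by
  intro h u
  simp only [down]
  rw [show traceV t (h.drop (h.length - t)) u = traceV t h u from Subtype.ext (trace_drop t h u),
    hσ (lifts t [] h) (lifts t [] (h.drop (h.length - t))) (traceV t h u)]

theorem down_valid {k : ℕ} (A : Arena k V) (t : ℕ) (σ' : Strategy (UnfV V t))
    (hσ : Strategy.Valid (unfoldArena A t) σ') :
    Strategy.Valid A (down A.init t σ') := by
  intro h u v hv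
  simp only [down] at hv
  obtain ⟨a, ha, hva⟩ := pmf_map_ne_zero _ _ _ hv
  obtain ⟨v', hav', hv'⟩ := unfold_next_elim A t (trace_getLast? t h u) (hσ _ _ _ ha)
  rw [hva, hav', last'_gw]
  exact hv'

end StrategyMaps

/-! #### Step/extension/word probability transfer -/

set_option linter.unusedSectionVars false

section ProbTransfer

variable {k n : ℕ} (A : Arena k (Fin n)) (t : ℕ)

theorem step_eq (σ' : Profile k (UnfV (Fin n) t))
    (hval : Profile.Valid (unfoldArena A t) σ') (h : List (Fin n)) (u v : Fin n) :
    A.stepProb (fun i => down A.init t (σ' i)) h u v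
      = (unfoldArena A t).stepProb σ' (lifts t [] h) (traceV t h u) (traceV t (h ++ [u]) v) := by
  have howner : (unfoldArena A t).owner (traceV t h u) = A.owner u :=
    unfold_owner A t (trace_getLast? t h u)
  simp only [Arena.stepProb]
  rw [howner]
  rcases ho : A.owner u with _ | i
  · show ENNReal.ofReal _ = ENNReal.ofReal _
    congr 2
    rw [unfold_prob_eq A t (trace_getLast? t h u) (trace_getLast? t (h ++ [u]) v),
      if_pos (show (traceV t (h ++ [u]) v).val = succWord t (traceV t h u).val v from
        trace_snoc t h u v)]
  · show PMF.map (last' A.init) (σ' i (lifts t [] h) (traceV t h u)) v = _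
    apply pmf_map_apply_eq
    · exact last'_traceV A.init t (h ++ [u]) v
    · intro a ha hla
      obtain ⟨v', hav', _⟩ :=
        unfold_next_elim A t (trace_getLast? t h u) (hval i _ _ a ha)
      rw [hav', gw_traceV]
      rw [hav', last'_gw] at hla
      rw [hla]

theorem step_ne_zero (σ' : Profile k (UnfV (Fin n) t))
    (hval : Profile.Valid (unfoldArena A t) σ') (h' : List (UnfV (Fin n) t))
    (h : List (Fin n)) (u : Fin n) (w'' : UnfV (Fin n) t)
    (hne : (unfoldArena A t).stepProb σ' h' (traceV t h u) w'' ≠ 0) :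
    ∃ v, w'' = traceV t (h ++ [u]) v := by
  have howner : (unfoldArena A t).owner (traceV t h u) = A.owner u :=
    unfold_owner A t (trace_getLast? t h u)
  simp only [Arena.stepProb] at hne
  rw [howner] at hne
  rcases ho : A.owner u with _ | i <;> rw [ho] at hne
  · cases hl'' : w''.val.getLast? with
    | none => rw [unfold_prob_none A t (trace_getLast? t h u) hl''] at hne; simp at hne
    | some v =>
      rw [unfold_prob_eq A t (trace_getLast? t h u) hl''] at hne
      by_cases hc : w''.val = succWord t (traceV t h u).val v
      · exact ⟨v, Subtype.ext (by rw [hc, traceV_val]; exact (trace_snoc t h u v).symm)⟩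
      · rw [if_neg hc] at hne; simp at hne
  · obtain ⟨v, hw'', _⟩ :=
      unfold_next_elim A t (trace_getLast? t h u) (hval i h' (traceV t h u) w'' hne)
    exact ⟨v, by rw [hw'', gw_traceV]⟩

theorem ext_eq (σ' : Profile k (UnfV (Fin n) t))
    (hval : Profile.Valid (unfoldArena A t) σ') (rest : List (Fin n)) :
    ∀ (h : List (Fin n)) (u : Fin n),
      extProb A (fun i => down A.init t (σ' i)) h u rest
        = extProb (unfoldArena A t) σ' (lifts t [] h) (traceV t h u) (lifts t (h ++ [u]) rest) := by
  induction rest with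
  | nil => intro h u; rfl
  | cons v rest ih =>
    intro h u
    simp only [lifts, extProb]
    rw [step_eq A t σ' hval h u v, ih (h ++ [u]) v,
      show lifts t [] (h ++ [u]) = lifts t [] h ++ [traceV t h u] from
        by rw [lifts_snoc t h [] u, List.nil_append]]

theorem ext_good (σ' : Profile k (UnfV (Fin n) t))
    (hval : Profile.Valid (unfoldArena A t) σ') (rest' : List (UnfV (Fin n) t)) :
    ∀ (h : List (Fin n)) (u : Fin n),
      extProb (unfoldArena A t) σ' (lifts t [] h) (traceV t h u) rest' ≠ 0 →
      ∃ rest, rest' = lifts t (h ++ [u]) rest := by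
  induction rest' with
  | nil => intro h u _; exact ⟨[], rfl⟩
  | cons w'' r' ih =>
    intro h u hne
    simp only [extProb] at hne
    rw [mul_ne_zero_iff] at hne
    obtain ⟨v, hv⟩ := step_ne_zero A t σ' hval _ h u w'' hne.1
    subst hv
    have h2 := hne.2
    rw [show lifts t [] h ++ [traceV t h u] = lifts t [] (h ++ [u]) from
      by rw [lifts_snoc t h [] u, List.nil_append]] at h2
    obtain ⟨rest, hrest⟩ := ih (h ++ [u]) v h2
    refine ⟨v :: rest, ?_⟩
    simp only [lifts]
    rw [hrest]

theorem word_eq (σ' : Profile k (UnfV (Fin n) t))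
    (hval : Profile.Valid (unfoldArena A t) σ') (w : List (Fin n)) :
    wordProbFrom A (fun i => down A.init t (σ' i)) A.init w
      = wordProbFrom (unfoldArena A t) σ' (unfoldArena A t).init (lifts t [] w) := by
  cases w with
  | nil => rfl
  | cons v rest =>
    simp only [wordProbFrom, lifts]
    have hiff : (traceV t [] v = (unfoldArena A t).init) ↔ v = A.init := by
      rw [Subtype.ext_iff]
      show trace t [] v = [A.init] ↔ _
      simp [trace]
    by_cases hv : v = A.init
    · rw [if_pos hv, if_pos (hiff.2 hv), ext_eq A t σ' hval rest [] v]
      rfl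
    · rw [if_neg hv, if_neg (fun hc => hv (hiff.1 hc))]
      simp

theorem word_good (σ' : Profile k (UnfV (Fin n) t))
    (hval : Profile.Valid (unfoldArena A t) σ') (w' : List (UnfV (Fin n) t))
    (hne : wordProbFrom (unfoldArena A t) σ' (unfoldArena A t).init w' ≠ 0) :
    ∃ w, w' = lifts t [] w ∧ (w = [] ∨ ∃ r, w = A.init :: r) := by
  cases w' with
  | nil => exact ⟨[], rfl, Or.inl rfl⟩
  | cons w'' r' =>
    simp only [wordProbFrom] at hne
    rw [mul_ne_zero_iff] at hne
    have hw'' : w'' = (unfoldArena A t).init := by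
      by_contra hc; rw [if_neg hc] at hne; exact hne.1 rfl
    have hinit2 : (unfoldArena A t).init = traceV t [] A.init :=
      Subtype.ext (show [A.init] = trace t [] A.init by simp [trace])
    have h2 := hne.2
    rw [hw'', hinit2] at h2
    have h3 : extProb (unfoldArena A t) σ' (lifts t [] []) (traceV t [] A.init) r' ≠ 0 := h2
    obtain ⟨rest, hrest⟩ := ext_good A t σ' hval r' [] A.init h3
    refine ⟨A.init :: rest, ?_, Or.inr ⟨rest, rfl⟩⟩
    simp only [lifts]
    rw [hw'', hrest, hinit2]

end ProbTransfer

/-! #### Muller objective correspondence -/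

theorem exists_inf_fiber {β : Type} [Finite β] (f : ℕ → β) (S : Set ℕ)
    (hS : ∀ m, ∃ l, m ≤ l ∧ l ∈ S) :
    ∃ b, ∀ m, ∃ l, m ≤ l ∧ l ∈ S ∧ f l = b := by
  by_contra hc
  push_neg at hc
  choose M hM using hc
  cases nonempty_fintype β
  obtain ⟨l, hl, hlS⟩ := hS (Finset.univ.sup M)
  exact hM (f l) l (le_trans (Finset.le_sup (Finset.mem_univ (f l))) hl) hlS rfl

section Muller

variable {k n : ℕ} (t : ℕ)

theorem muller_lift (π : Play (Fin n)) (φ : BForm (Fin n)) :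
    liftP t π ∈ mullerObj (unfoldForm t φ) ↔ π ∈ mullerObj φ := by
  simp only [mullerObj, Set.mem_setOf_eq, unfoldForm]
  rw [holds_subst']
  apply holds_congr'
  intro v
  rw [holds_bigOr']
  constructor
  · rintro ⟨ψ, hmem, hψ⟩
    rw [List.mem_filterMap] at hmem
    obtain ⟨x, hx, hfx⟩ := hmem
    by_cases hc : (x ++ [v]).length ≤ t + 1
    · rw [dif_pos hc] at hfx
      obtain rfl := Option.some.inj hfx
      intro m
      obtain ⟨l, hl, he⟩ := hψ m
      refine ⟨l, hl, ?_⟩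
      have h2 := congrArg (fun w : UnfV (Fin n) t => w.val.getLast?) he
      simp only [liftP, traceV_val, trace_getLast?] at h2
      rw [List.getLast?_concat] at h2
      exact Option.some.inj h2
    · rw [dif_neg hc] at hfx
      exact absurd hfx (by simp)
  · intro hv
    obtain ⟨w', hw'⟩ := exists_inf_fiber (liftP t π) {l | π l = v} hv
    obtain ⟨l₀, _, hl₀v, hl₀w⟩ := hw' 0
    set x : List (Fin n) := (pfx π l₀).drop ((pfx π l₀).length - t) with hxdef
    have hxlen : x.length ≤ t := by rw [hxdef, List.length_drop]; omega
    have hwval : w'.val = x ++ [v] := by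
      rw [← hl₀w]
      simp only [liftP, traceV_val, trace]
      rw [hl₀v]
    have hc : (x ++ [v]).length ≤ t + 1 := by simp; omega
    refine ⟨BForm.var (⟨x ++ [v], hc⟩ : UnfV (Fin n) t), ?_, ?_⟩
    · rw [List.mem_filterMap]
      exact ⟨x, (mem_wordsUpTo x).2 hxlen, by rw [dif_pos hc]⟩
    · show (⟨x ++ [v], hc⟩ : UnfV (Fin n) t) ∈ infSet (liftP t π)
      have hww : (⟨x ++ [v], hc⟩ : UnfV (Fin n) t) = w' := Subtype.ext hwval.symm
      rw [hww]
      intro m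
      obtain ⟨l, hl, _, he⟩ := hw' m
      exact ⟨l, hl, he⟩

theorem good_play (A : Arena k (Fin n)) (π' : Play (UnfV (Fin n) t))
    (hall : ∀ L, ∃ w, pfx π' L = lifts t [] w ∧ (w = [] ∨ ∃ r, w = A.init :: r)) :
    π' = liftP t (fun l => last' A.init (π' l)) ∧ π' 0 = (unfoldArena A t).init := by
  set π : Play (Fin n) := fun l => last' A.init (π' l) with hπ
  have key : ∀ j, pfx π' (j + 1) = pfx (liftP t π) (j + 1) := by
    intro j
    obtain ⟨w, hw, _⟩ := hall (j + 1)
    have hwp : w = pfx π (j + 1) := by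
      have h2 := congrArg (List.map (last' A.init)) hw
      rw [map_last'_lifts] at h2
      rw [← h2, pfx_map]
    rw [hw, hwp, lifts_pfx]
  have hpoint : ∀ j, π' j = liftP t π j := by
    intro j
    have h1 := key j
    rw [pfx_snoc, pfx_snoc] at h1
    have h2 := congrArg List.getLast? h1
    rw [List.getLast?_concat, List.getLast?_concat] at h2
    exact Option.some.inj h2
  constructor
  · funext j; exact hpoint j
  · obtain ⟨w, hw, hh⟩ := hall 1
    have hlen := congrArg List.length hw
    rw [pfx_length, lifts_length] at hlen
    rcases hh with rfl | ⟨r, hr⟩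
    · simp at hlen
    · subst hr
      have hr0 : r = [] := by
        rw [List.length_cons] at hlen
        exact List.length_eq_zero_iff.1 (by omega)
      subst hr0
      have h1 : pfx π' 1 = [π' 0] := by simp [pfx, List.range_succ]
      rw [h1] at hw
      have h2 : π' 0 = traceV t [] A.init := by
        simpa [lifts] using hw
      rw [h2]
      exact (Subtype.ext (show [A.init] = trace t [] A.init by simp [trace])).symm

end Muller

/-! #### The cylinder premeasure -/

section Premeasure

variable {k : ℕ} {V : Type} [DecidableEq V]

open scoped Classical in
noncomputable def pm (A : Arena k V) (σ : Profile k V) (s : V) (S : Set (Play V)) : ℝ≥0∞ :=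
  if S = ∅ then 0 else ⨅ (w : List V) (_ : S ⊆ cyl w), wordProbFrom A σ s w

theorem PrFrom_apply (A : Arena k V) (σ : Profile k V) (s : V) (O : Set (Play V)) :
    PrFrom A σ s O = ⨅ (T : ℕ → Set (Play V)) (_ : O ⊆ ⋃ m, T m), ∑' m, pm A σ s (T m) := by
  unfold PrFrom pm
  rw [MeasureTheory.OuterMeasure.ofFunction_apply]

theorem pm_empty (A : Arena k V) (σ : Profile k V) (s : V) : pm A σ s ∅ = 0 := if_pos rfl

theorem pm_le (A : Arena k V) (σ : Profile k V) (s : V) {S : Set (Play V)} {w : List V}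
    (hsub : S ⊆ cyl w) : pm A σ s S ≤ wordProbFrom A σ s w := by
  unfold pm
  split
  · exact zero_le
  · exact iInf₂_le w hsub

theorem PrFrom_le_tsum (A : Arena k V) (σ : Profile k V) (s : V) {O : Set (Play V)}
    (T : ℕ → Set (Play V)) (hcov : O ⊆ ⋃ m, T m) :
    PrFrom A σ s O ≤ ∑' m, pm A σ s (T m) := by
  rw [PrFrom_apply]; exact iInf₂_le T hcov

theorem le_PrFrom (A : Arena k V) (σ : Profile k V) (s : V) {O : Set (Play V)} {x : ℝ≥0∞}
    (h : ∀ T : ℕ → Set (Play V), O ⊆ ⋃ m, T m → x ≤ ∑' m, pm A σ s (T m)) :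
    x ≤ PrFrom A σ s O := by
  rw [PrFrom_apply]; exact le_iInf₂ h

theorem mem_cyl_singleton (π : Play V) (v : V) : π ∈ cyl [v] ↔ π 0 = v := by
  constructor
  · intro h; exact h 0 (by simp)
  · intro h i hi
    obtain rfl : i = 0 := by simpa using hi
    exact h

theorem wordProb_single_ne (A : Arena k V) (σ : Profile k V) (s : V) (v : V) (hv : v ≠ s) :
    wordProbFrom A σ s [v] = 0 := by
  simp [wordProbFrom, extProb, hv]

end Premeasure

/-! #### Equality of payoffs under unfolding -/

section PayEq

variable {k n : ℕ} (A : Arena k (Fin n)) (t : ℕ)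

theorem pr_le (σ' : Profile k (UnfV (Fin n) t))
    (hval : Profile.Valid (unfoldArena A t) σ') (φ : BForm (Fin n)) :
    PrFrom A (fun i => down A.init t (σ' i)) A.init (mullerObj φ)
      ≤ PrFrom (unfoldArena A t) σ' (unfoldArena A t).init (mullerObj (unfoldForm t φ)) := by
  classical
  apply le_PrFrom
  intro T' hT'
  set σd : Profile k (Fin n) := fun i => down A.init t (σ' i) with hσd
  set Ψ : Set (Play (UnfV (Fin n) t)) → Set (Play (Fin n)) :=
    fun S' => {π | π 0 = A.init ∧ liftP t π ∈ S'} with hΨ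
  set T : ℕ → Set (Play (Fin n)) := fun m =>
    if m % 2 = 0 then
      (if h : m / 2 < n then
        {π | π 0 = (⟨m / 2, h⟩ : Fin n) ∧ (⟨m / 2, h⟩ : Fin n) ≠ A.init} else ∅)
    else Ψ (T' (m / 2)) with hT
  have hTeven : ∀ j, T (2 * j) =
      if h : j < n then
        {π | π 0 = (⟨j, h⟩ : Fin n) ∧ (⟨j, h⟩ : Fin n) ≠ A.init} else ∅ := by
    intro j
    have h1 : (2 * j) % 2 = 0 := by omega
    have h2 : (2 * j) / 2 = j := by omega
    simp only [hT, h2]; rw [if_pos h1]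
  have hTodd : ∀ j, T (2 * j + 1) = Ψ (T' j) := by
    intro j
    have h1 : ¬ ((2 * j + 1) % 2 = 0) := by omega
    have h2 : (2 * j + 1) / 2 = j := by omega
    simp only [hT, h2]; rw [if_neg h1]
  have hcov : mullerObj φ ⊆ ⋃ m, T m := by
    intro π hπ
    by_cases h0 : π 0 = A.init
    · have hm : liftP t π ∈ mullerObj (unfoldForm t φ) := (muller_lift t π φ).2 hπ
      obtain ⟨j, hj⟩ := Set.mem_iUnion.1 (hT' hm)
      refine Set.mem_iUnion.2 ⟨2 * j + 1, ?_⟩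
      rw [hTodd]
      exact ⟨h0, hj⟩
    · refine Set.mem_iUnion.2 ⟨2 * (π 0).val, ?_⟩
      rw [hTeven, dif_pos (π 0).isLt]
      refine ⟨(Fin.eta (π 0) (π 0).isLt).symm, ?_⟩
      rw [Fin.eta]
      exact h0
  have hgz : ∀ j, pm A σd A.init (T (2 * j)) = 0 := by
    intro j
    rw [hTeven]
    by_cases hj : j < n
    · rw [dif_pos hj]
      by_cases hne : (⟨j, hj⟩ : Fin n) = A.init
      · rw [show {π : Play (Fin n) | π 0 = ⟨j, hj⟩ ∧ (⟨j, hj⟩ : Fin n) ≠ A.init} = ∅ by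
          ext π; simp [hne]]
        exact pm_empty A σd A.init
      · refine le_antisymm ?_ zero_le
        calc pm A σd A.init _
            ≤ wordProbFrom A σd A.init [⟨j, hj⟩] :=
              pm_le A σd A.init (fun π hπ => (mem_cyl_singleton π _).2 hπ.1)
          _ = 0 := wordProb_single_ne A σd A.init _ hne
    · rw [dif_neg hj]
      exact pm_empty A σd A.init
  have hkey : ∀ S', pm A σd A.init (Ψ S')
      ≤ pm (unfoldArena A t) σ' (unfoldArena A t).init S' := by
    intro S'
    by_cases hS : S' = ∅
    · subst hS
      rw [show Ψ ∅ = ∅ by ext π; simp [hΨ], pm_empty, pm_empty]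
    · rw [show pm (unfoldArena A t) σ' (unfoldArena A t).init S'
          = ⨅ (w' : List (UnfV (Fin n) t)) (_ : S' ⊆ cyl w'),
              wordProbFrom (unfoldArena A t) σ' (unfoldArena A t).init w' from if_neg hS]
      refine le_iInf fun w' => le_iInf fun hw' => ?_
      by_cases hΨe : Ψ S' = ∅
      · rw [hΨe, pm_empty]
        exact zero_le
      · obtain ⟨π₀, h00, h01⟩ := Set.nonempty_iff_ne_empty.2 hΨe
        have hcyl : pfx (liftP t π₀) w'.length = w' :=
          (mem_cyl_iff (liftP t π₀) w').1 (hw' h01)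
        set w : List (Fin n) := pfx π₀ w'.length with hwdef
        have hw'eq : w' = lifts t [] w := by
          rw [hwdef, lifts_pfx, hcyl]
        have hsub : Ψ S' ⊆ cyl w := by
          rintro π ⟨hπ0, hπ1⟩
          have h2 : pfx (liftP t π) w'.length = w' := (mem_cyl_iff _ _).1 (hw' hπ1)
          rw [mem_cyl_iff, show w.length = w'.length by rw [hwdef, pfx_length]]
          have h3 : lifts t [] (pfx π w'.length) = lifts t [] w := by
            rw [lifts_pfx, h2, hw'eq]
          have h4 := congrArg (List.map (last' A.init)) h3
          rw [map_last'_lifts, map_last'_lifts] at h4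
          exact h4
        calc pm A σd A.init (Ψ S') ≤ wordProbFrom A σd A.init w := pm_le A σd A.init hsub
          _ = wordProbFrom (unfoldArena A t) σ' (unfoldArena A t).init (lifts t [] w) :=
            word_eq A t σ' hval w
          _ = wordProbFrom (unfoldArena A t) σ' (unfoldArena A t).init w' := by rw [← hw'eq]
  calc PrFrom A σd A.init (mullerObj φ) ≤ ∑' m, pm A σd A.init (T m) :=
        PrFrom_le_tsum A σd A.init T hcov
    _ = (∑' j, pm A σd A.init (T (2 * j))) + ∑' j, pm A σd A.init (T (2 * j + 1)) :=
        (tsum_even_add_odd ENNReal.summable ENNReal.summable).symm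
    _ = ∑' j, pm A σd A.init (Ψ (T' j)) := by
        have e1 : (∑' j, pm A σd A.init (T (2 * j))) = 0 := by
          simp only [hgz]; exact tsum_zero
        rw [e1, zero_add]
        exact tsum_congr fun j => by rw [hTodd]
    _ ≤ ∑' j, pm (unfoldArena A t) σ' (unfoldArena A t).init (T' j) :=
        ENNReal.tsum_le_tsum fun j => hkey (T' j)

theorem pr_ge (σ' : Profile k (UnfV (Fin n) t))
    (hval : Profile.Valid (unfoldArena A t) σ') (φ : BForm (Fin n)) :
    PrFrom (unfoldArena A t) σ' (unfoldArena A t).init (mullerObj (unfoldForm t φ))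
      ≤ PrFrom A (fun i => down A.init t (σ' i)) A.init (mullerObj φ) := by
  classical
  apply le_PrFrom
  intro T hT
  set σd : Profile k (Fin n) := fun i => down A.init t (σ' i) with hσd
  set Good : List (UnfV (Fin n) t) → Prop := fun w' =>
    ∃ w, w' = lifts t [] w ∧ (w = [] ∨ ∃ r, w = A.init :: r) with hGood
  set B : ℕ → Set (Play (UnfV (Fin n) t)) := fun j =>
    ((Encodable.decode j : Option (List (UnfV (Fin n) t))).elim ∅
      fun w' => if Good w' then ∅ else cyl w') with hB
  set Ψ' : Set (Play (Fin n)) → Set (Play (UnfV (Fin n) t)) :=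
    fun S => {π' | ∃ π, π ∈ S ∧ π' = liftP t π} with hΨ'
  set T'' : ℕ → Set (Play (UnfV (Fin n) t)) := fun m =>
    if m % 2 = 0 then B (m / 2) else Ψ' (T (m / 2)) with hT''
  have hTeven : ∀ j, T'' (2 * j) = B j := by
    intro j
    have h1 : (2 * j) % 2 = 0 := by omega
    have h2 : (2 * j) / 2 = j := by omega
    simp only [hT'', h2]; rw [if_pos h1]
  have hTodd : ∀ j, T'' (2 * j + 1) = Ψ' (T j) := by
    intro j
    have h1 : ¬ ((2 * j + 1) % 2 = 0) := by omega
    have h2 : (2 * j + 1) / 2 = j := by omega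
    simp only [hT'', h2]; rw [if_neg h1]
  have hcov : mullerObj (unfoldForm t φ) ⊆ ⋃ m, T'' m := by
    intro π' hπ'
    by_cases hall : ∀ L, Good (pfx π' L)
    · obtain ⟨heq, _⟩ := good_play t A π' (fun L => hall L)
      set π : Play (Fin n) := fun l => last' A.init (π' l) with hπ
      have hπO : π ∈ mullerObj φ := (muller_lift t π φ).1 (by rw [← heq]; exact hπ')
      obtain ⟨j, hj⟩ := Set.mem_iUnion.1 (hT hπO)
      refine Set.mem_iUnion.2 ⟨2 * j + 1, ?_⟩
      rw [hTodd]
      exact ⟨π, hj, heq⟩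
    · push_neg at hall
      obtain ⟨L, hL⟩ := hall
      refine Set.mem_iUnion.2 ⟨2 * (Encodable.encode (pfx π' L)), ?_⟩
      rw [hTeven]
      have hBe : B (Encodable.encode (pfx π' L))
          = if Good (pfx π' L) then ∅ else cyl (pfx π' L) := by
        simp only [hB, Encodable.encodek, Option.elim]
      rw [hBe, if_neg hL, mem_cyl_iff, pfx_length]
  have hBz : ∀ j, pm (unfoldArena A t) σ' (unfoldArena A t).init (B j) = 0 := by
    intro j
    have hBj : B j = (Encodable.decode j : Option (List (UnfV (Fin n) t))).elim ∅
        (fun w' => if Good w' then ∅ else cyl w') := by simp only [hB]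
    cases hd : (Encodable.decode j : Option (List (UnfV (Fin n) t))) with
    | none => rw [hBj, hd]; exact pm_empty _ _ _
    | some w' =>
      rw [hBj, hd]
      simp only [Option.elim]
      by_cases hg : Good w'
      · rw [if_pos hg]
        exact pm_empty _ _ _
      · rw [if_neg hg]
        refine le_antisymm ?_ zero_le
        have h0 : wordProbFrom (unfoldArena A t) σ' (unfoldArena A t).init w' = 0 := by
          by_contra hc
          exact hg (word_good A t σ' hval w' hc)
        calc pm (unfoldArena A t) σ' (unfoldArena A t).init (cyl w')
            ≤ wordProbFrom (unfoldArena A t) σ' (unfoldArena A t).init w' :=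
              pm_le _ _ _ (subset_refl _)
          _ = 0 := h0
  have hkey : ∀ S, pm (unfoldArena A t) σ' (unfoldArena A t).init (Ψ' S)
      ≤ pm A σd A.init S := by
    intro S
    by_cases hS : S = ∅
    · subst hS
      rw [show Ψ' ∅ = ∅ by ext π'; simp [hΨ'], pm_empty, pm_empty]
    · rw [show pm A σd A.init S
          = ⨅ (w : List (Fin n)) (_ : S ⊆ cyl w), wordProbFrom A σd A.init w from if_neg hS]
      refine le_iInf fun w => le_iInf fun hw => ?_
      have hsub : Ψ' S ⊆ cyl (lifts t [] w) := by
        rintro π' ⟨π, hπS, rfl⟩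
        rw [mem_cyl_iff, lifts_length, ← lifts_pfx,
          (mem_cyl_iff π w).1 (hw hπS)]
      calc pm (unfoldArena A t) σ' (unfoldArena A t).init (Ψ' S)
          ≤ wordProbFrom (unfoldArena A t) σ' (unfoldArena A t).init (lifts t [] w) :=
            pm_le _ _ _ hsub
        _ = wordProbFrom A σd A.init w := (word_eq A t σ' hval w).symm
  calc PrFrom (unfoldArena A t) σ' (unfoldArena A t).init (mullerObj (unfoldForm t φ))
      ≤ ∑' m, pm (unfoldArena A t) σ' (unfoldArena A t).init (T'' m) :=
        PrFrom_le_tsum _ _ _ T'' hcov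
    _ = (∑' j, pm (unfoldArena A t) σ' (unfoldArena A t).init (T'' (2 * j)))
        + ∑' j, pm (unfoldArena A t) σ' (unfoldArena A t).init (T'' (2 * j + 1)) :=
        (tsum_even_add_odd ENNReal.summable ENNReal.summable).symm
    _ = ∑' j, pm (unfoldArena A t) σ' (unfoldArena A t).init (Ψ' (T j)) := by
        have e1 : (∑' j, pm (unfoldArena A t) σ' (unfoldArena A t).init (T'' (2 * j))) = 0 := by
          have : ∀ j, pm (unfoldArena A t) σ' (unfoldArena A t).init (T'' (2 * j)) = 0 := by
            intro j; rw [hTeven]; exact hBz j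
          simp only [this]; exact tsum_zero
        rw [e1, zero_add]
        exact tsum_congr fun j => by rw [hTodd]
    _ ≤ ∑' j, pm A σd A.init (T j) := ENNReal.tsum_le_tsum fun j => hkey (T j)

theorem pay_eq (σ' : Profile k (UnfV (Fin n) t))
    (hval : Profile.Valid (unfoldArena A t) σ') (obj : Fin (k + 1) → BForm (Fin n))
    (i : Fin (k + 1)) :
    Pay A (fun i => mullerObj (obj i)) (fun i => down A.init t (σ' i)) i
      = Pay (unfoldArena A t) (fun i => mullerObj (unfoldForm t (obj i))) σ' i :=
  le_antisymm (pr_le A t σ' hval (obj i)) (pr_ge A t σ' hval (obj i))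

theorem zne_transfer (obj : Fin (k + 1) → BForm (Fin n)) (σ' : Profile k (UnfV (Fin n) t))
    (hval : Profile.Valid (unfoldArena A t) σ') :
    ZeroNE (unfoldArena A t) (fun i => mullerObj (unfoldForm t (obj i))) σ' ↔
      ZeroNE A (fun i => mullerObj (obj i)) (fun i => down A.init t (σ' i)) := by
  classical
  constructor
  · intro hz i hi τ hτ
    have hval2 : Profile.Valid (unfoldArena A t)
        (Function.update σ' i (liftGen A.init t τ)) := by
      intro j
      by_cases hj : j = i
      · subst hj; rw [Function.update_self]; exact liftGen_valid A t τ hτ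
      · rw [Function.update_of_ne hj]; exact hval j
    have e1 : Function.update (fun j => down A.init t (σ' j)) i τ
        = fun j => down A.init t (Function.update σ' i (liftGen A.init t τ) j) := by
      funext j
      by_cases hj : j = i
      · subst hj; rw [Function.update_self, Function.update_self, down_liftGen]
      · rw [Function.update_of_ne hj, Function.update_of_ne hj]
    calc Pay A (fun i => mullerObj (obj i))
          (Function.update (fun j => down A.init t (σ' j)) i τ) i
        = Pay (unfoldArena A t) (fun i => mullerObj (unfoldForm t (obj i)))
            (Function.update σ' i (liftGen A.init t τ)) i := by
          rw [e1]; exact pay_eq A t _ hval2 obj i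
      _ ≤ Pay (unfoldArena A t) (fun i => mullerObj (unfoldForm t (obj i))) σ' i :=
          hz i hi (liftGen A.init t τ) (liftGen_valid A t τ hτ)
      _ = Pay A (fun i => mullerObj (obj i)) (fun j => down A.init t (σ' j)) i :=
          (pay_eq A t σ' hval obj i).symm
  · intro hz i hi τ' hτ'
    have hval2 : Profile.Valid (unfoldArena A t) (Function.update σ' i τ') := by
      intro j
      by_cases hj : j = i
      · subst hj; rw [Function.update_self]; exact hτ'
      · rw [Function.update_of_ne hj]; exact hval j
    have e1 : (fun j => down A.init t (Function.update σ' i τ' j))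
        = Function.update (fun j => down A.init t (σ' j)) i (down A.init t τ') := by
      funext j
      by_cases hj : j = i
      · subst hj; rw [Function.update_self, Function.update_self]
      · rw [Function.update_of_ne hj, Function.update_of_ne hj]
    calc Pay (unfoldArena A t) (fun i => mullerObj (unfoldForm t (obj i)))
          (Function.update σ' i τ') i
        = Pay A (fun i => mullerObj (obj i))
            (fun j => down A.init t (Function.update σ' i τ' j)) i :=
          (pay_eq A t _ hval2 obj i).symm
      _ = Pay A (fun i => mullerObj (obj i))
            (Function.update (fun j => down A.init t (σ' j)) i (down A.init t τ')) i := by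
          rw [e1]
      _ ≤ Pay A (fun i => mullerObj (obj i)) (fun j => down A.init t (σ' j)) i :=
          hz i hi (down A.init t τ') (down_valid A t τ' hτ')
      _ = Pay (unfoldArena A t) (fun i => mullerObj (unfoldForm t (obj i))) σ' i :=
          pay_eq A t σ' hval obj i

end PayEq

end Statement16Aux

/-- The unfolded game `G'` of an SMG `G` with Muller
objectives: it has at most exponentially many (`n^{O(n)}` for `t ∈ O(n)`)
vertices, pure `t`-memory strategies of `G` correspond to positional
strategies of `G'`, and the answer of Pure `t`-memory-Muller-NCRSP for
`(G, μ)` equals the answer of Positional-Muller-NCRSP for `(G', μ)`. -/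
theorem unfolded_game_correct {k n : ℕ} (A : Arena k (Fin n)) (hwf : A.WF)
    (t : ℕ) (obj : Fin (k + 1) → BForm (Fin n)) (μ : ℚ) :
    (∀ c : ℕ, t ≤ c * n + c →
      Nat.card (UnfV (Fin n) t) ≤ (n + 1) ^ (c * n + c + 2)) ∧
    Nonempty
      ({σ : Strategy (Fin n) //
          Strategy.Pure σ ∧ Strategy.TMemory t σ ∧ Strategy.Valid A σ} ≃
       {σ' : Strategy (UnfV (Fin n) t) //
          Strategy.Positional σ' ∧ Strategy.Valid (unfoldArena A t) σ'}) ∧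
    (NCRSPAnswer A (fun i => mullerObj (obj i))
        (fun σ => Strategy.Pure σ ∧ Strategy.TMemory t σ)
        (fun σ => Strategy.Pure σ ∧ Strategy.TMemory t σ) μ ↔
      NCRSPAnswer (unfoldArena A t)
        (fun i => mullerObj (unfoldForm t (obj i)))
        Strategy.Positional Strategy.Positional μ) := by
  classical
  refine ⟨?_, ⟨?_⟩, ?_⟩
  · intro c hc
    calc Nat.card (UnfV (Fin n) t) ≤ (n + 1) ^ (t + 1) := card_UnfV_le n t
      _ ≤ (n + 1) ^ (c * n + c + 2) :=
        Nat.pow_le_pow_right (by omega) (by omega)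
  · exact
      { toFun := fun σp => ⟨liftPos A.init t σp.1,
          ⟨liftPos_stationary A.init t σp.1, liftPos_pure A.init t σp.1 σp.2.1⟩,
          liftPos_valid A t σp.1 σp.2.2.2⟩
        invFun := fun σp' => ⟨down A.init t σp'.1,
          down_pure A.init t σp'.1 σp'.2.1.2, down_tmemory A.init t σp'.1 σp'.2.1.1,
          down_valid A t σp'.1 σp'.2.2⟩
        left_inv := fun σp => Subtype.ext (down_liftPos A.init t σp.1 σp.2.2.1)
        right_inv := fun σp' => Subtype.ext (liftPos_down A t σp'.1 σp'.2.1.1 σp'.2.2) }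
  · constructor
    · rintro ⟨σ0, hσ0v, ⟨hσ0p, hσ0t⟩, hP⟩
      refine ⟨liftPos A.init t σ0, liftPos_valid A t σ0 hσ0v,
        ⟨liftPos_stationary A.init t σ0, liftPos_pure A.init t σ0 hσ0p⟩, ?_⟩
      intro σ' hσ'0 hσ'v hσ'env hzne
      have hσd0 : (fun i => down A.init t (σ' i)) 0 = σ0 := by
        show down A.init t (σ' 0) = σ0
        rw [hσ'0, down_liftPos A.init t σ0 hσ0t]
      have hσdv : Profile.Valid A (fun i => down A.init t (σ' i)) :=
        fun i => down_valid A t (σ' i) (hσ'v i)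
      have hσdenv : ∀ i, i ≠ 0 →
          Strategy.Pure ((fun i => down A.init t (σ' i)) i) ∧
            Strategy.TMemory t ((fun i => down A.init t (σ' i)) i) := by
        intro i hi
        exact ⟨down_pure A.init t (σ' i) (hσ'env i hi).2,
          down_tmemory A.init t (σ' i) (hσ'env i hi).1⟩
      have hzneA : ZeroNE A (fun i => mullerObj (obj i)) (fun i => down A.init t (σ' i)) :=
        (zne_transfer A t obj σ' hσ'v).1 hzne
      calc ENNReal.ofReal (μ : ℝ)
          ≤ Pay A (fun i => mullerObj (obj i)) (fun i => down A.init t (σ' i)) 0 :=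
            hP (fun i => down A.init t (σ' i)) hσd0 hσdv hσdenv hzneA
        _ = Pay (unfoldArena A t) (fun i => mullerObj (unfoldForm t (obj i))) σ' 0 :=
            pay_eq A t σ' hσ'v obj 0
    · rintro ⟨σ0', hσ0'v, ⟨hσ0's, hσ0'p⟩, hP⟩
      refine ⟨down A.init t σ0', down_valid A t σ0' hσ0'v,
        ⟨down_pure A.init t σ0' hσ0'p, down_tmemory A.init t σ0' hσ0's⟩, ?_⟩
      intro σ hσ0 hσv hσenv hzne
      set σ' : Profile k (UnfV (Fin n) t) :=
        Function.update (fun i => liftPos A.init t (σ i)) 0 σ0' with hσ'def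
      have hσ'0 : σ' 0 = σ0' := by
        rw [hσ'def]; simp
      have hσ'v : Profile.Valid (unfoldArena A t) σ' := by
        intro i
        by_cases hi : i = 0
        · subst hi; rw [hσ'0]; exact hσ0'v
        · rw [hσ'def, Function.update_of_ne hi]
          exact liftPos_valid A t (σ i) (hσv i)
      have hσ'env : ∀ i, i ≠ 0 → Strategy.Positional (σ' i) := by
        intro i hi
        rw [hσ'def, Function.update_of_ne hi]
        exact ⟨liftPos_stationary A.init t (σ i), liftPos_pure A.init t (σ i) (hσenv i hi).1⟩
      have hdown : (fun i => down A.init t (σ' i)) = σ := by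
        funext i
        by_cases hi : i = 0
        · subst hi
          show down A.init t (σ' 0) = σ 0
          rw [hσ'0]
          exact hσ0.symm
        · show down A.init t (σ' i) = σ i
          rw [hσ'def, Function.update_of_ne hi,
            down_liftPos A.init t (σ i) (hσenv i hi).2]
      have hzne' : ZeroNE (unfoldArena A t) (fun i => mullerObj (unfoldForm t (obj i))) σ' := by
        rw [zne_transfer A t obj σ' hσ'v, hdown]
        exact hzne
      calc ENNReal.ofReal (μ : ℝ)
          ≤ Pay (unfoldArena A t) (fun i => mullerObj (unfoldForm t (obj i))) σ' 0 :=
            hP σ' hσ'0 hσ'v hσ'env hzne'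
        _ = Pay A (fun i => mullerObj (obj i)) (fun i => down A.init t (σ' i)) 0 :=
            (pay_eq A t σ' hσ'v obj 0).symm
        _ = Pay A (fun i => mullerObj (obj i)) σ 0 := by rw [hdown]

end NCRSPPaper
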